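/- Let G=(V,E) be a finite cubic simple graph (every vertex has degree 3) such that the energy function E is not constant on spin configurations, and let E_min be the minimum of E(S) over all S : V → {−1,1}. Then there exists a spin configuration S with E(S) > E_min and E(S) ≤ E_min + 8. In other words, the gap between the smallest and the second smallest value of E is at most 8. -/
import Mathlib


open Finset

/-- The edge term `f k * f l` as a function on unordered pairs. -/
def edgeTerm {V : Type*} (f : V → ℤ) : Sym2 V → ℤ :=
  Sym2.lift ⟨fun k l => f k * f l, fun k l => by ring⟩

/-- `E(S) = ∑_{k∈V} S_k + ∑_{{k,l}∈E} S_k S_l`. -/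
def En {V : Type*} [Fintype V] [DecidableEq V] (G : SimpleGraph V)
    [DecidableRel G.Adj] (S : V → ℤ) : ℤ :=
  (∑ k, S k) + ∑ e ∈ G.edgeFinset, edgeTerm S e

lemma edgeTerm_mk {V : Type*} (f : V → ℤ) (a b : V) :
    edgeTerm f s(a, b) = f a * f b := rfl

lemma flip_diff_le {V : Type*} [Fintype V] [DecidableEq V]
    (G : SimpleGraph V) [DecidableRel G.Adj]
    (hcubic : ∀ k, G.degree k = 3) (S : V → ℤ)
    (hS : ∀ k, S k = -1 ∨ S k = 1) (k : V) :
    |En G (Function.update S k (-S k)) - En G S| ≤ 8 := by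
  set T := Function.update S k (-S k) with hT
  have hTk : T k = -S k := Function.update_self k _ S
  have hTl : ∀ l, l ≠ k → T l = S l := fun l hl => Function.update_of_ne hl _ S
  have hTspin : ∀ l, T l = -1 ∨ T l = 1 := by
    intro l
    by_cases h : l = k
    · subst h; rw [hTk]; rcases hS l with h | h <;> rw [h] <;> simp
    · rw [hTl l h]; exact hS l
  have h1 : (∑ l, T l) - (∑ l, S l) = T k - S k := by
    rw [← Finset.sum_sub_distrib, Finset.sum_eq_single k]
    · intro b _ hb; rw [hTl b hb]; ring
    · intro h; exact absurd (Finset.mem_univ k) h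
  have hsplit : En G T - En G S
      = (T k - S k) + ∑ e ∈ G.edgeFinset, (edgeTerm T e - edgeTerm S e) := by
    unfold En
    rw [Finset.sum_sub_distrib, ← h1]
    ring
  have hbound : ∀ e ∈ G.edgeFinset, |edgeTerm T e - edgeTerm S e|
      ≤ if k ∈ e then 2 else 0 := by
    intro e he
    induction e using Sym2.inductionOn with
    | hf a b =>
      by_cases hk : k ∈ s(a, b)
      · rw [if_pos hk, edgeTerm_mk, edgeTerm_mk]
        have hxy : ∀ x y : ℤ, (x = -1 ∨ x = 1) → (y = -1 ∨ y = 1) →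
            |x * y - x * y| ≤ 2 := by rintro x y (rfl|rfl) (rfl|rfl) <;> norm_num
        have h2 : ∀ x y z w : ℤ, (x = -1 ∨ x = 1) → (y = -1 ∨ y = 1) →
            (z = -1 ∨ z = 1) → (w = -1 ∨ w = 1) → |x * y - z * w| ≤ 2 := by
          rintro x y z w (rfl|rfl) (rfl|rfl) (rfl|rfl) (rfl|rfl) <;> norm_num
        exact h2 _ _ _ _ (hTspin a) (hTspin b) (hS a) (hS b)
      · rw [if_neg hk, edgeTerm_mk, edgeTerm_mk]
        rw [Sym2.mem_iff] at hk
        push_neg at hk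
        rw [hTl a (fun h => hk.1 h.symm), hTl b (fun h => hk.2 h.symm)]
        simp
  have hcard : (G.edgeFinset.filter (fun e => k ∈ e)).card = 3 := by
    rw [← SimpleGraph.incidenceFinset_eq_filter, SimpleGraph.card_incidenceFinset_eq_degree]
    exact hcubic k
  have hsum : |∑ e ∈ G.edgeFinset, (edgeTerm T e - edgeTerm S e)| ≤ 6 := by
    calc |∑ e ∈ G.edgeFinset, (edgeTerm T e - edgeTerm S e)|
        ≤ ∑ e ∈ G.edgeFinset, |edgeTerm T e - edgeTerm S e| :=
          Finset.abs_sum_le_sum_abs _ _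
      _ ≤ ∑ e ∈ G.edgeFinset, (if k ∈ e then (2 : ℤ) else 0) :=
          Finset.sum_le_sum hbound
      _ = ∑ e ∈ G.edgeFinset.filter (fun e => k ∈ e), (2 : ℤ) := by
          rw [Finset.sum_filter]
      _ = 6 := by rw [Finset.sum_const, hcard]; norm_num
  have hTkS : |T k - S k| ≤ 2 := by
    rw [hTk]; rcases hS k with h | h <;> rw [h] <;> norm_num
  calc |En G T - En G S|
      = |(T k - S k) + ∑ e ∈ G.edgeFinset, (edgeTerm T e - edgeTerm S e)| := by
        rw [hsplit]
    _ ≤ |T k - S k| + |∑ e ∈ G.edgeFinset, (edgeTerm T e - edgeTerm S e)| :=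
        abs_add_le _ _
    _ ≤ 2 + 6 := add_le_add hTkS hsum
    _ = 8 := by norm_num

lemma aux_gap {V : Type*} [Fintype V] [DecidableEq V]
    (G : SimpleGraph V) [DecidableRel G.Adj]
    (hcubic : ∀ k, G.degree k = 3) (Emin : ℤ)
    (hmin : IsLeast {z : ℤ | ∃ S : V → ℤ,
      (∀ k, S k = -1 ∨ S k = 1) ∧ En G S = z} Emin) :
    ∀ n : ℕ, ∀ S S' : V → ℤ, (∀ k, S k = -1 ∨ S k = 1) →
      (∀ k, S' k = -1 ∨ S' k = 1) → En G S = Emin → En G S' ≠ Emin →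
      (univ.filter (fun l => S l ≠ S' l)).card ≤ n →
      ∃ T : V → ℤ, (∀ k, T k = -1 ∨ T k = 1) ∧
        Emin < En G T ∧ En G T ≤ Emin + 8 := by
  intro n
  induction n with
  | zero =>
    intro S S' hS hS' hE hE' hc
    exfalso
    apply hE'
    have hf : (univ.filter (fun l => S l ≠ S' l)) = ∅ :=
      Finset.card_eq_zero.mp (Nat.le_zero.mp hc)
    have hSS : S = S' := by
      funext l
      by_contra h
      have : l ∈ univ.filter (fun l => S l ≠ S' l) := by simp [h]
      rw [hf] at this
      exact absurd this (Finset.notMem_empty l)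
    rw [← hSS, hE]
  | succ n ih =>
    intro S S' hS hS' hE hE' hc
    have hne : (univ.filter (fun l => S l ≠ S' l)).Nonempty := by
      rw [Finset.nonempty_iff_ne_empty]
      intro hf
      apply hE'
      have hSS : S = S' := by
        funext l
        by_contra h
        have : l ∈ univ.filter (fun l => S l ≠ S' l) := by simp [h]
        rw [hf] at this
        exact absurd this (Finset.notMem_empty l)
      rw [← hSS, hE]
    obtain ⟨k, hk⟩ := hne
    have hkne : S k ≠ S' k := (Finset.mem_filter.mp hk).2
    set T := Function.update S k (-S k) with hTdef
    have hTk : T k = -S k := Function.update_self k _ S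
    have hTl : ∀ l, l ≠ k → T l = S l := fun l hl => Function.update_of_ne hl _ S
    have hTspin : ∀ l, T l = -1 ∨ T l = 1 := by
      intro l
      by_cases h : l = k
      · subst h; rw [hTk]; rcases hS l with h | h <;> rw [h] <;> simp
      · rw [hTl l h]; exact hS l
    have hTge : Emin ≤ En G T := hmin.2 ⟨T, hTspin, rfl⟩
    rcases eq_or_lt_of_le hTge with heq | hlt
    · -- recurse
      apply ih T S' hTspin hS' heq.symm hE'
      have hTkS' : T k = S' k := by
        rw [hTk]
        rcases hS k with h | h <;> rcases hS' k with h' | h' <;>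
          rw [h, h'] <;> first | rfl | (exfalso; rw [h, h'] at hkne; simp at hkne)
      have hsub : (univ.filter (fun l => T l ≠ S' l))
          ⊆ (univ.filter (fun l => S l ≠ S' l)).erase k := by
        intro l hl
        rw [Finset.mem_filter] at hl
        have hlk : l ≠ k := by
          intro h; subst h; exact hl.2 hTkS'
        rw [Finset.mem_erase, Finset.mem_filter]
        refine ⟨hlk, Finset.mem_univ l, ?_⟩
        rw [← hTl l hlk]; exact hl.2
      have := Finset.card_le_card hsub
      rw [Finset.card_erase_of_mem hk] at this
      omega
    · refine ⟨T, hTspin, hlt, ?_⟩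
      have h8 := flip_diff_le G hcubic S hS k
      rw [abs_le, ← hTdef, hE] at h8
      omega

/-- If the energy of a cubic graph is not constant on spin configurations,
then the gap between the smallest and the second smallest value of `E` is at
most 8: some configuration has energy strictly above, but within 8 of, the
minimum energy `Emin`. -/
theorem gap_le_eight {V : Type*} [Fintype V] [DecidableEq V]
    (G : SimpleGraph V) [DecidableRel G.Adj]
    (hcubic : ∀ k, G.degree k = 3)
    (hnonconst : ∃ S S' : V → ℤ, (∀ k, S k = -1 ∨ S k = 1) ∧
      (∀ k, S' k = -1 ∨ S' k = 1) ∧ En G S ≠ En G S')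
    (Emin : ℤ)
    (hmin : IsLeast {z : ℤ | ∃ S : V → ℤ,
      (∀ k, S k = -1 ∨ S k = 1) ∧ En G S = z} Emin) :
    ∃ S : V → ℤ, (∀ k, S k = -1 ∨ S k = 1) ∧
      Emin < En G S ∧ En G S ≤ Emin + 8 := by
  obtain ⟨S0, hS0, hE0⟩ := hmin.1
  obtain ⟨S, S', hS, hS', hne⟩ := hnonconst
  have : En G S ≠ Emin ∨ En G S' ≠ Emin := by
    by_contra h
    push_neg at h
    exact hne (h.1.trans h.2.symm)
  rcases this with h | h
  · exact aux_gap G hcubic Emin hmin (Fintype.card V) S0 S hS0 hS hE0 h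
      (le_trans (Finset.card_filter_le _ _) (le_of_eq (Finset.card_univ)))
  · exact aux_gap G hcubic Emin hmin (Fintype.card V) S0 S' hS0 hS' hE0 h
      (le_trans (Finset.card_filter_le _ _) (le_of_eq (Finset.card_univ)))
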